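/- Let f, g : ℝ → ℝ₊ be integrable unimodal functions. Then the essential supremum of the convolution f ⋆ g is at least the essential supremum of f↓ ⋆ g↓, where f↓ and g↓ are the decreasing rearrangements of f and g. -/

import Mathlib

open MeasureTheory ENNReal

/-- Decreasing rearrangement of a set `A ⊆ ℝ`: the interval `[0, |A|)`
(all of `[0, ∞)` if `A` has infinite measure). -/
def setRearr (A : Set ℝ) : Set ℝ := {x | 0 ≤ x ∧ ENNReal.ofReal x < volume A}

/-- Decreasing rearrangement of a nonnegative real function:
`f↓(x) = sup {λ : x ∈ {f > λ}↓}`. -/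
noncomputable def decRearrNN (f : ℝ → ℝ) : ℝ → ℝ :=
  fun x => sSup {l : ℝ | x ∈ setRearr {y | l < f y}}

/-- Convolution of two real functions: `(f ⋆ g)(x) = ∫ f(t) g(x - t) dt`. -/
noncomputable def conv (f g : ℝ → ℝ) : ℝ → ℝ := fun x => ∫ t, f t * g (x - t)

/-- Essential supremum (w.r.t. Lebesgue measure) of a real function, valued in `ℝ≥0∞`. -/
noncomputable def essSupNN (f : ℝ → ℝ) : ℝ≥0∞ :=
  essSup (fun x => ENNReal.ofReal (f x)) volume

/-- `f : ℝ → ℝ` is unimodal: non-decreasing on `(-∞, x₀)` and non-increasing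
on `(x₀, ∞)` for some `x₀`. -/
def Unimodal (f : ℝ → ℝ) : Prop :=
  ∃ x₀ : ℝ, MonotoneOn f (Set.Iio x₀) ∧ AntitoneOn f (Set.Ioi x₀)

namespace CRAux
open Set

def lv (f : ℝ → ℝ) (l : ℝ) : Set ℝ := {y | l < f y}

noncomputable def phi (f : ℝ → ℝ) (l : ℝ) : ℝ≥0∞ := volume (lv f l)

theorem mem_lv {f : ℝ → ℝ} {l y : ℝ} : y ∈ lv f l ↔ l < f y := Iff.rfl

theorem lv_anti {f : ℝ → ℝ} {l l' : ℝ} (h : l ≤ l') : lv f l' ⊆ lv f l :=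
  fun _ hy => lt_of_le_of_lt h hy

theorem phi_anti (f : ℝ → ℝ) : Antitone (phi f) :=
  fun _ _ h => measure_mono (lv_anti h)

theorem decRearrNN_eq (f : ℝ → ℝ) (x : ℝ) :
    decRearrNN f x = sSup {l : ℝ | 0 ≤ x ∧ ENNReal.ofReal x < phi f l} := rfl

theorem lintegral_ofReal_lt_top {f : ℝ → ℝ} (hfi : Integrable f) :
    ∫⁻ y, ENNReal.ofReal (f y) < ⊤ := by
  refine lt_of_le_of_lt ?_ hfi.hasFiniteIntegral
  exact lintegral_mono fun y => Real.ofReal_le_enorm (f y)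

theorem phi_fin {f : ℝ → ℝ} (hfi : Integrable f) {l : ℝ} (hl : 0 < l) : phi f l ≠ ⊤ := by
  intro htop
  have h1 : ENNReal.ofReal l * volume {y | ENNReal.ofReal l ≤ ENNReal.ofReal (f y)} ≤
      ∫⁻ y, ENNReal.ofReal (f y) :=
    mul_meas_ge_le_lintegral₀ (ENNReal.measurable_ofReal.comp_aemeasurable hfi.aemeasurable) _
  have h2 : phi f l ≤ volume {y | ENNReal.ofReal l ≤ ENNReal.ofReal (f y)} := by
    apply measure_mono
    intro y hy
    exact ENNReal.ofReal_le_ofReal (le_of_lt hy)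
  rw [htop] at h2
  have h3 : volume {y | ENNReal.ofReal l ≤ ENNReal.ofReal (f y)} = ⊤ := top_le_iff.mp h2
  rw [h3, ENNReal.mul_top (ENNReal.ofReal_pos.mpr hl).ne'] at h1
  exact absurd (top_le_iff.mp h1) (lintegral_ofReal_lt_top hfi).ne

theorem exists_gt_of_lt_phi {f : ℝ → ℝ} {x l : ℝ}
    (h : ENNReal.ofReal x < phi f l) : ∃ l' > l, ENNReal.ofReal x < phi f l' := by
  have hun : lv f l = ⋃ n : ℕ, lv f (l + 1/(n+1)) := by
    ext y
    simp only [mem_lv, mem_iUnion]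
    constructor
    · intro hy
      obtain ⟨n, hn⟩ := exists_nat_one_div_lt (sub_pos.2 hy)
      exact ⟨n, by push_cast; push_cast at hn; linarith⟩
    · rintro ⟨n, hn⟩
      have h0 : (0:ℝ) < 1/(n+1) := by positivity
      linarith
  have hdir : Directed (· ⊆ ·) (fun n : ℕ => lv f (l + 1/(n+1))) := by
    intro m n
    have hb : ∀ k j : ℕ, k ≤ j → l + 1/(j+1) ≤ l + 1/(k+1) := by
      intro k j hkj
      have : (1:ℝ)/(j+1) ≤ 1/(k+1) := by
        apply one_div_le_one_div_of_le
        · positivity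
        · have := (Nat.cast_le (α := ℝ)).mpr hkj; push_cast; linarith
      linarith
    exact ⟨max m n, lv_anti (hb m (max m n) (le_max_left _ _)),
      lv_anti (hb n (max m n) (le_max_right _ _))⟩
  have := Directed.measure_iUnion (μ := volume) hdir
  rw [phi, hun, this] at h
  obtain ⟨n, hn⟩ := lt_iSup_iff.mp h
  have : (0:ℝ) < 1/(n+1) := by positivity
  exact ⟨l + 1/(n+1), by linarith, hn⟩

def Sset (f : ℝ → ℝ) (x : ℝ) : Set ℝ := {l : ℝ | 0 ≤ x ∧ ENNReal.ofReal x < phi f l}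

theorem decRearrNN_eq' (f : ℝ → ℝ) (x : ℝ) : decRearrNN f x = sSup (Sset f x) := rfl

theorem neg_mem_Sset {f : ℝ → ℝ} (hf0 : ∀ y, 0 ≤ f y) {x : ℝ} (hx : 0 ≤ x) {l : ℝ}
    (hl : l < 0) : l ∈ Sset f x := by
  refine ⟨hx, ?_⟩
  have : lv f l = univ := by
    ext y; simp only [mem_lv, mem_univ, iff_true]
    exact lt_of_lt_of_le hl (hf0 y)
  rw [phi, this, Real.volume_univ]
  exact ENNReal.ofReal_lt_top

theorem decRearrNN_of_neg {f : ℝ → ℝ} {x : ℝ} (hx : x < 0) : decRearrNN f x = 0 := by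
  rw [decRearrNN_eq']
  have : Sset f x = ∅ := by
    ext l; simp only [Sset, mem_setOf_eq, mem_empty_iff_false, iff_false, not_and]
    intro h; linarith
  rw [this, Real.sSup_empty]

theorem decRearrNN_nonneg {f : ℝ → ℝ} (hf0 : ∀ y, 0 ≤ f y) (x : ℝ) :
    0 ≤ decRearrNN f x := by
  rcases lt_or_ge x 0 with hx | hx
  · rw [decRearrNN_of_neg hx]
  · rw [decRearrNN_eq']
    by_cases hb : BddAbove (Sset f x)
    · by_contra hneg
      push_neg at hneg
      have h1 : sSup (Sset f x) / 2 ∈ Sset f x := neg_mem_Sset hf0 hx (by linarith)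
      have := le_csSup hb h1
      linarith
    · rw [csSup_of_not_bddAbove hb, Real.sSup_empty]

theorem decRearrNN_gt_imp {f : ℝ → ℝ} {x l : ℝ} (hl : 0 ≤ l)
    (h : l < decRearrNN f x) : 0 ≤ x ∧ ENNReal.ofReal x < phi f l := by
  rw [decRearrNN_eq'] at h
  have hne : (Sset f x).Nonempty := by
    by_contra hemp
    rw [not_nonempty_iff_eq_empty] at hemp
    rw [hemp, Real.sSup_empty] at h; linarith
  have hb : BddAbove (Sset f x) := by
    by_contra hb
    rw [csSup_of_not_bddAbove hb, Real.sSup_empty] at h; linarith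
  obtain ⟨a, ha, hla⟩ := exists_lt_of_lt_csSup hne h
  exact ⟨ha.1, lt_of_lt_of_le ha.2 (phi_anti f hla.le)⟩

theorem bddAbove_Sset {f : ℝ → ℝ} (hfi : Integrable f) {x : ℝ} (hx : 0 < x) :
    BddAbove (Sset f x) := by
  set I := ∫⁻ y, ENNReal.ofReal (f y) with hI
  refine ⟨(I / ENNReal.ofReal x).toReal + 1, fun l hl => ?_⟩
  rcases le_or_gt l 0 with h0 | h0
  · have : (0:ℝ) ≤ (I / ENNReal.ofReal x).toReal := ENNReal.toReal_nonneg
    linarith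
  · have h1 : ENNReal.ofReal l * volume {y | ENNReal.ofReal l ≤ ENNReal.ofReal (f y)} ≤ I :=
      mul_meas_ge_le_lintegral₀ (ENNReal.measurable_ofReal.comp_aemeasurable hfi.aemeasurable) _
    have h2 : phi f l ≤ volume {y | ENNReal.ofReal l ≤ ENNReal.ofReal (f y)} :=
      measure_mono fun y hy => ENNReal.ofReal_le_ofReal (le_of_lt hy)
    have h3 : ENNReal.ofReal l * ENNReal.ofReal x ≤ I := by
      refine le_trans ?_ h1
      exact mul_le_mul_right (le_trans hl.2.le h2) _
    have h4 : ENNReal.ofReal l ≤ I / ENNReal.ofReal x := by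
      rw [ENNReal.le_div_iff_mul_le (Or.inl (ENNReal.ofReal_pos.mpr hx).ne')
        (Or.inl ENNReal.ofReal_ne_top)]
      exact h3
    have hIt : I ≠ ⊤ := (lintegral_ofReal_lt_top hfi).ne
    have h5 : I / ENNReal.ofReal x ≠ ⊤ :=
      (ENNReal.div_lt_top hIt (ENNReal.ofReal_pos.mpr hx).ne').ne
    have h6 : l ≤ (I / ENNReal.ofReal x).toReal := by
      have := ENNReal.toReal_mono h5 h4
      rwa [ENNReal.toReal_ofReal h0.le] at this
    linarith

theorem decRearrNN_gt_iff {f : ℝ → ℝ} (hfi : Integrable f) {x l : ℝ} (hl : 0 ≤ l)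
    (hx : 0 < x) : l < decRearrNN f x ↔ ENNReal.ofReal x < phi f l := by
  constructor
  · exact fun h => (decRearrNN_gt_imp hl h).2
  · intro h
    obtain ⟨l', hl', hxl'⟩ := exists_gt_of_lt_phi h
    have : l' ∈ Sset f x := ⟨hx.le, hxl'⟩
    have := le_csSup (bddAbove_Sset hfi hx) this
    rw [decRearrNN_eq']
    linarith

theorem unimodal_measurable {f : ℝ → ℝ} (hfu : Unimodal f) : Measurable f := by
  obtain ⟨x₀, hm, ha⟩ := hfu
  apply measurable_of_Ioi
  intro l
  have hdecomp : f ⁻¹' Ioi l =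
      (lv f l ∩ Iio x₀) ∪ ((lv f l ∩ {x₀}) ∪ (lv f l ∩ Ioi x₀)) := by
    ext y
    simp only [mem_preimage, mem_Ioi, mem_union, mem_inter_iff, mem_lv, mem_Iio,
      mem_singleton_iff]
    constructor
    · intro hy
      rcases lt_trichotomy y x₀ with h | h | h
      · exact Or.inl ⟨hy, h⟩
      · exact Or.inr (Or.inl ⟨hy, h⟩)
      · exact Or.inr (Or.inr ⟨hy, h⟩)
    · rintro (⟨hy, _⟩ | ⟨hy, _⟩ | ⟨hy, _⟩) <;> exact hy
  rw [hdecomp]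
  refine MeasurableSet.union ?_ (MeasurableSet.union ?_ ?_)
  · apply Set.OrdConnected.measurableSet
    constructor
    rintro a ⟨ha1, ha2⟩ b ⟨hb1, hb2⟩ c ⟨hc1, hc2⟩
    have hcx : c < x₀ := lt_of_le_of_lt hc2 hb2
    refine ⟨?_, hcx⟩
    exact lt_of_lt_of_le ha1 (hm ha2 hcx hc1)
  · exact (Set.Subsingleton.measurableSet (fun a haa b hbb =>
      haa.2.trans hbb.2.symm))
  · apply Set.OrdConnected.measurableSet
    constructor
    rintro a ⟨ha1, ha2⟩ b ⟨hb1, hb2⟩ c ⟨hc1, hc2⟩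
    have hcx : x₀ < c := lt_of_lt_of_le ha2 hc1
    refine ⟨?_, hcx⟩
    exact lt_of_lt_of_le hb1 (ha hcx hb2 hc2)

theorem decRearrNN_measurable {f : ℝ → ℝ} (hfi : Integrable f) (hf0 : ∀ y, 0 ≤ f y) :
    Measurable (decRearrNN f) := by
  apply measurable_of_Ioi
  intro l
  by_cases hl : 0 ≤ l
  · have hdecomp : decRearrNN f ⁻¹' Ioi l =
        {x | 0 < x ∧ ENNReal.ofReal x < phi f l} ∪
          (if l < decRearrNN f 0 then {(0:ℝ)} else ∅) := by
      ext x
      simp only [mem_preimage, mem_Ioi, mem_union, mem_setOf_eq]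
      constructor
      · intro hx
        rcases lt_trichotomy x 0 with h | h | h
        · rw [decRearrNN_of_neg h] at hx; linarith
        · subst h
          right; simp [hx]
        · exact Or.inl ⟨h, (decRearrNN_gt_imp hl hx).2⟩
      · rintro (⟨hx1, hx2⟩ | hx)
        · exact (decRearrNN_gt_iff hfi hl hx1).mpr hx2
        · split_ifs at hx with hcond
          · simp only [mem_singleton_iff] at hx; subst hx; exact hcond
          · simp at hx
    rw [hdecomp]
    refine MeasurableSet.union ?_ ?_
    · by_cases hfin : phi f l = ⊤
      · have : {x | 0 < x ∧ ENNReal.ofReal x < phi f l} = Ioi 0 := by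
          ext x; simp [hfin, ENNReal.ofReal_lt_top]
        rw [this]; exact measurableSet_Ioi
      · have : {x | 0 < x ∧ ENNReal.ofReal x < phi f l} = Ioo 0 (phi f l).toReal := by
          ext x
          simp only [mem_setOf_eq, mem_Ioo]
          constructor
          · rintro ⟨h1, h2⟩
            exact ⟨h1, (ENNReal.ofReal_lt_iff_lt_toReal h1.le hfin).mp h2⟩
          · rintro ⟨h1, h2⟩
            exact ⟨h1, (ENNReal.ofReal_lt_iff_lt_toReal h1.le hfin).mpr h2⟩
        rw [this]; exact measurableSet_Ioo
    · split_ifs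
      · exact measurableSet_singleton 0
      · exact MeasurableSet.empty
  · push_neg at hl
    have : decRearrNN f ⁻¹' Ioi l = univ := by
      ext x
      simp only [mem_preimage, mem_Ioi, mem_univ, iff_true]
      exact lt_of_lt_of_le hl (decRearrNN_nonneg hf0 x)
    rw [this]; exact MeasurableSet.univ

section Level

variable {f : ℝ → ℝ} {x₀ l : ℝ}

theorem level_left (hm : MonotoneOn f (Iio x₀)) {y z : ℝ} (hy : y ∈ lv f l)
    (h1 : y < z) (h2 : z < x₀) : z ∈ lv f l :=
  lt_of_lt_of_le hy (hm (mem_Iio.mpr (h1.trans h2)) (mem_Iio.mpr h2) h1.le)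

theorem level_right (ha : AntitoneOn f (Ioi x₀)) {y z : ℝ} (hy : y ∈ lv f l)
    (h1 : x₀ < z) (h2 : z < y) : z ∈ lv f l :=
  lt_of_lt_of_le hy (ha (mem_Ioi.mpr h1) (mem_Ioi.mpr (h1.trans h2)) h2.le)

theorem level_bddBelow (hm : MonotoneOn f (Iio x₀)) (hfin : phi f l ≠ ⊤) :
    BddBelow (lv f l) := by
  by_contra hb
  rw [not_bddBelow_iff] at hb
  obtain ⟨y, hy, hylt⟩ := hb (min x₀ (x₀ - (phi f l).toReal - 1))
  have h1 : y < x₀ := lt_of_lt_of_le hylt (min_le_left _ _)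
  have h2 : y < x₀ - (phi f l).toReal - 1 := lt_of_lt_of_le hylt (min_le_right _ _)
  have hsub : Ioo y x₀ ⊆ lv f l := fun z hz => level_left hm hy hz.1 hz.2
  have h3 : ENNReal.ofReal (x₀ - y) ≤ phi f l := by
    rw [← Real.volume_Ioo]
    exact measure_mono hsub
  have h4 : x₀ - y ≤ (phi f l).toReal := by
    rw [← ENNReal.ofReal_le_iff_le_toReal hfin]
    exact h3
  linarith

theorem level_bddAbove (ha : AntitoneOn f (Ioi x₀)) (hfin : phi f l ≠ ⊤) :
    BddAbove (lv f l) := by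
  by_contra hb
  rw [not_bddAbove_iff] at hb
  obtain ⟨y, hy, hylt⟩ := hb (max x₀ (x₀ + (phi f l).toReal + 1))
  have h1 : x₀ < y := lt_of_le_of_lt (le_max_left _ _) hylt
  have h2 : x₀ + (phi f l).toReal + 1 < y := lt_of_le_of_lt (le_max_right _ _) hylt
  have hsub : Ioo x₀ y ⊆ lv f l := fun z hz => level_right ha hy hz.1 hz.2
  have h3 : ENNReal.ofReal (y - x₀) ≤ phi f l := by
    rw [← Real.volume_Ioo]
    exact measure_mono hsub
  have h4 : y - x₀ ≤ (phi f l).toReal := by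
    rw [← ENNReal.ofReal_le_iff_le_toReal hfin]
    exact h3
  linarith

theorem level_Ioo (hm : MonotoneOn f (Iio x₀)) (ha : AntitoneOn f (Ioi x₀))
    (hne : (lv f l).Nonempty) :
    Ioo (sInf (lv f l)) (sSup (lv f l)) \ {x₀} ⊆ lv f l := by
  rintro z ⟨⟨h1, h2⟩, h3⟩
  simp only [mem_singleton_iff] at h3
  rcases lt_trichotomy z x₀ with hz | hz | hz
  · obtain ⟨y, hy, hyz⟩ := exists_lt_of_csInf_lt hne h1
    exact level_left hm hy hyz hz
  · exact absurd hz h3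
  · obtain ⟨y, hy, hzy⟩ := exists_lt_of_lt_csSup hne h2
    exact level_right ha hy hz hzy

theorem level_subset_Icc (hm : MonotoneOn f (Iio x₀)) (ha : AntitoneOn f (Ioi x₀))
    (hfin : phi f l ≠ ⊤) : lv f l ⊆ Icc (sInf (lv f l)) (sSup (lv f l)) :=
  fun _ hy => ⟨csInf_le (level_bddBelow hm hfin) hy, le_csSup (level_bddAbove ha hfin) hy⟩

theorem level_vol (hm : MonotoneOn f (Iio x₀)) (ha : AntitoneOn f (Ioi x₀))
    (hne : (lv f l).Nonempty) (hfin : phi f l ≠ ⊤) :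
    phi f l = ENNReal.ofReal (sSup (lv f l) - sInf (lv f l)) := by
  apply le_antisymm
  · calc phi f l ≤ volume (Icc (sInf (lv f l)) (sSup (lv f l))) :=
          measure_mono (level_subset_Icc hm ha hfin)
    _ = ENNReal.ofReal (sSup (lv f l) - sInf (lv f l)) := Real.volume_Icc
  · calc ENNReal.ofReal (sSup (lv f l) - sInf (lv f l))
        = volume (Ioo (sInf (lv f l)) (sSup (lv f l))) := Real.volume_Ioo.symm
    _ = volume (Ioo (sInf (lv f l)) (sSup (lv f l)) \ {x₀}) :=
          (measure_diff_null (measure_singleton _)).symm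
    _ ≤ phi f l := measure_mono (level_Ioo hm ha hne)

end Level

theorem measurableSet_lv {F : ℝ → ℝ} (hF : Measurable F) (l : ℝ) :
    MeasurableSet (lv F l) := hF measurableSet_Ioi

theorem ofReal_eq_lintegral_ind (r : ℝ) :
    ENNReal.ofReal r = ∫⁻ l in Ioi (0:ℝ), (Iio r).indicator (fun _ => (1:ℝ≥0∞)) l := by
  rw [lintegral_indicator measurableSet_Iio, setLIntegral_one,
    Measure.restrict_apply measurableSet_Iio]
  rw [show Iio r ∩ Ioi (0:ℝ) = Ioo 0 r by rw [inter_comm, Ioi_inter_Iio],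
    Real.volume_Ioo, sub_zero]

theorem lintegral_mul_eq_layer (F G : ℝ → ℝ) (hF : Measurable F) (hG : Measurable G) :
    ∫⁻ t, ENNReal.ofReal (F t) * ENNReal.ofReal (G t) =
    ∫⁻ l in Ioi (0:ℝ), ∫⁻ m in Ioi (0:ℝ), volume (lv F l ∩ lv G m) := by
  have hmeas1 : Measurable (Function.uncurry fun t l =>
      (Iio (F t)).indicator (fun _ => (1:ℝ≥0∞)) l * ENNReal.ofReal (G t)) := by
    have h1 : (Function.uncurry fun t l =>
        (Iio (F t)).indicator (fun _ => (1:ℝ≥0∞)) l * ENNReal.ofReal (G t)) =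
        fun p : ℝ × ℝ => ({q : ℝ × ℝ | q.2 < F q.1}.indicator (fun _ => (1:ℝ≥0∞)) p) *
          ENNReal.ofReal (G p.1) := by
      funext p
      by_cases hp : p.2 < F p.1 <;>
        simp [Function.uncurry, Set.indicator_apply, hp]
    rw [h1]
    exact ((measurable_const.indicator
      (measurableSet_lt measurable_snd (hF.comp measurable_fst))).mul
      ((ENNReal.measurable_ofReal.comp hG).comp measurable_fst))
  calc ∫⁻ t, ENNReal.ofReal (F t) * ENNReal.ofReal (G t)
      = ∫⁻ t, ∫⁻ l in Ioi (0:ℝ),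
          (Iio (F t)).indicator (fun _ => (1:ℝ≥0∞)) l * ENNReal.ofReal (G t) := by
        refine lintegral_congr fun t => ?_
        rw [lintegral_mul_const' _ _ ENNReal.ofReal_ne_top, ← ofReal_eq_lintegral_ind]
    _ = ∫⁻ l in Ioi (0:ℝ), ∫⁻ t,
          (Iio (F t)).indicator (fun _ => (1:ℝ≥0∞)) l * ENNReal.ofReal (G t) :=
        lintegral_lintegral_swap hmeas1.aemeasurable
    _ = ∫⁻ l in Ioi (0:ℝ), ∫⁻ m in Ioi (0:ℝ), volume (lv F l ∩ lv G m) := by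
        refine lintegral_congr fun l => ?_
        have h2 : ∀ t, (Iio (F t)).indicator (fun _ => (1:ℝ≥0∞)) l * ENNReal.ofReal (G t) =
            (lv F l).indicator (fun t => ENNReal.ofReal (G t)) t := by
          intro t
          by_cases ht : l < F t <;> simp [Set.indicator_apply, ht, mem_lv]
        rw [lintegral_congr h2, lintegral_indicator (measurableSet_lv hF l)]
        have hmeas2 : Measurable (Function.uncurry fun (t m : ℝ) =>
            (Iio (G t)).indicator (fun _ => (1:ℝ≥0∞)) m) := by
          have h3 : (Function.uncurry fun (t m : ℝ) =>
              (Iio (G t)).indicator (fun _ => (1:ℝ≥0∞)) m) =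
              fun p : ℝ × ℝ => {q : ℝ × ℝ | q.2 < G q.1}.indicator (fun _ => (1:ℝ≥0∞)) p := by
            funext p
            by_cases hp : p.2 < G p.1 <;>
              simp [Function.uncurry, Set.indicator_apply, hp]
          rw [h3]
          exact measurable_const.indicator
            (measurableSet_lt measurable_snd (hG.comp measurable_fst))
        calc ∫⁻ t in lv F l, ENNReal.ofReal (G t)
            = ∫⁻ t in lv F l, ∫⁻ m in Ioi (0:ℝ),
                (Iio (G t)).indicator (fun _ => (1:ℝ≥0∞)) m := by
              refine lintegral_congr fun t => ofReal_eq_lintegral_ind (G t)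
          _ = ∫⁻ m in Ioi (0:ℝ), ∫⁻ t in lv F l,
                (Iio (G t)).indicator (fun _ => (1:ℝ≥0∞)) m :=
              lintegral_lintegral_swap hmeas2.aemeasurable
          _ = ∫⁻ m in Ioi (0:ℝ), volume (lv F l ∩ lv G m) := by
              refine lintegral_congr fun m => ?_
              have h4 : ∀ t, (Iio (G t)).indicator (fun _ => (1:ℝ≥0∞)) m =
                  (lv G m).indicator (fun _ => (1:ℝ≥0∞)) t := by
                intro t
                by_cases ht : m < G t <;> simp [Set.indicator_apply, ht, mem_lv]
              rw [lintegral_congr h4, lintegral_indicator (measurableSet_lv hG m),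
                setLIntegral_one, Measure.restrict_apply (measurableSet_lv hG m),
                inter_comm]

noncomputable def mE (f g : ℝ → ℝ) (c : ℝ) (l m : ℝ) : ℝ≥0∞ :=
  min (min (phi f l) (phi g m))
    (min (ENNReal.ofReal c) ((phi f l + phi g m) - ENNReal.ofReal c))

theorem mE_anti_left (f g : ℝ → ℝ) (c m : ℝ) : Antitone (fun l => mE f g c l m) := by
  intro l l' h
  unfold mE
  have hφ := phi_anti f h
  exact min_le_min (min_le_min hφ le_rfl)
    (min_le_min le_rfl (tsub_le_tsub (add_le_add hφ le_rfl) le_rfl))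

theorem mE_anti_right (f g : ℝ → ℝ) (c l : ℝ) : Antitone (fun m => mE f g c l m) := by
  intro m m' h
  unfold mE
  have hψ := phi_anti g h
  exact min_le_min (min_le_min le_rfl hψ)
    (min_le_min le_rfl (tsub_le_tsub (add_le_add le_rfl hψ) le_rfl))

theorem mE_le_ofReal (f g : ℝ → ℝ) (c l m : ℝ) : mE f g c l m ≤ ENNReal.ofReal c :=
  le_trans (min_le_right _ _) (min_le_left _ _)

theorem mE_ne_top (f g : ℝ → ℝ) (c l m : ℝ) : mE f g c l m ≠ ⊤ :=
  (lt_of_le_of_lt (mE_le_ofReal f g c l m) ENNReal.ofReal_lt_top).ne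

theorem levelInt_bound {f g : ℝ → ℝ} (hfi : Integrable f) (hgi : Integrable g)
    (hf0 : ∀ y, 0 ≤ f y) (hg0 : ∀ y, 0 ≤ g y) {c l m : ℝ} (hc : 0 ≤ c)
    (hl : 0 < l) (hm : 0 < m) :
    volume (lv (decRearrNN f) l ∩ lv (fun t => decRearrNN g (c - t)) m) ≤ mE f g c l m := by
  set a := (phi f l).toReal with ha
  set b := (phi g m).toReal with hb
  have afin : phi f l ≠ ⊤ := phi_fin hfi hl
  have bfin : phi g m ≠ ⊤ := phi_fin hgi hm
  have hsub1 : lv (decRearrNN f) l ⊆ Ico 0 a := by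
    intro t ht
    obtain ⟨h1, h2⟩ := decRearrNN_gt_imp hl.le ht
    exact ⟨h1, (ENNReal.ofReal_lt_iff_lt_toReal h1 afin).mp h2⟩
  have hsub2 : lv (fun t => decRearrNN g (c - t)) m ⊆ Ioc (c - b) c := by
    intro t ht
    obtain ⟨h1, h2⟩ := decRearrNN_gt_imp hm.le ht
    have h3 : c - t < b := (ENNReal.ofReal_lt_iff_lt_toReal h1 bfin).mp h2
    constructor <;> linarith
  have b1 : volume (lv (decRearrNN f) l ∩ lv (fun t => decRearrNN g (c - t)) m) ≤ phi f l := by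
    calc volume _ ≤ volume (Ico 0 a) := measure_mono (le_trans inter_subset_left hsub1)
      _ = ENNReal.ofReal a := by rw [Real.volume_Ico, sub_zero]
      _ = phi f l := ENNReal.ofReal_toReal afin
  have b2 : volume (lv (decRearrNN f) l ∩ lv (fun t => decRearrNN g (c - t)) m) ≤ phi g m := by
    calc volume _ ≤ volume (Ioc (c - b) c) := measure_mono (le_trans inter_subset_right hsub2)
      _ = ENNReal.ofReal b := by rw [Real.volume_Ioc]; congr 1; ring
      _ = phi g m := ENNReal.ofReal_toReal bfin
  have b3 : volume (lv (decRearrNN f) l ∩ lv (fun t => decRearrNN g (c - t)) m) ≤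
      ENNReal.ofReal c := by
    have : lv (decRearrNN f) l ∩ lv (fun t => decRearrNN g (c - t)) m ⊆ Icc 0 c :=
      fun t ht => ⟨(hsub1 ht.1).1, (hsub2 ht.2).2⟩
    calc volume _ ≤ volume (Icc (0:ℝ) c) := measure_mono this
      _ = ENNReal.ofReal c := by rw [Real.volume_Icc, sub_zero]
  have b4 : volume (lv (decRearrNN f) l ∩ lv (fun t => decRearrNN g (c - t)) m) ≤
      (phi f l + phi g m) - ENNReal.ofReal c := by
    have hss : lv (decRearrNN f) l ∩ lv (fun t => decRearrNN g (c - t)) m ⊆ Ioo (c - b) a :=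
      fun t ht => ⟨(hsub2 ht.2).1, (hsub1 ht.1).2⟩
    have heq : ENNReal.ofReal (a - (c - b)) = (phi f l + phi g m) - ENNReal.ofReal c := by
      rw [show a - (c - b) = (a + b) - c by ring, ENNReal.ofReal_sub _ hc,
        ENNReal.ofReal_add ENNReal.toReal_nonneg ENNReal.toReal_nonneg,
        ENNReal.ofReal_toReal afin, ENNReal.ofReal_toReal bfin]
    calc volume _ ≤ volume (Ioo (c - b) a) := measure_mono hss
      _ = ENNReal.ofReal (a - (c - b)) := Real.volume_Ioo
      _ = _ := heq
  exact le_min (le_min b1 b2) (le_min b3 b4)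

theorem step1 {f g : ℝ → ℝ} (hfi : Integrable f) (hgi : Integrable g)
    (hf0 : ∀ y, 0 ≤ f y) (hg0 : ∀ y, 0 ≤ g y) {c : ℝ} (hc : 0 < c) :
    ENNReal.ofReal (conv (decRearrNN f) (decRearrNN g) c) ≤
    ∫⁻ l in Ioi (0:ℝ), ∫⁻ m in Ioi (0:ℝ), mE f g c l m := by
  have hFm : Measurable (decRearrNN f) := decRearrNN_measurable hfi hf0
  have hG'm : Measurable (fun t => decRearrNN g (c - t)) :=
    (decRearrNN_measurable hgi hg0).comp (measurable_const.sub measurable_id)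
  by_cases hint : Integrable (fun t => decRearrNN f t * decRearrNN g (c - t))
  · rw [conv, ofReal_integral_eq_lintegral_ofReal hint
      (ae_of_all _ fun t => mul_nonneg (decRearrNN_nonneg hf0 t) (decRearrNN_nonneg hg0 _))]
    rw [lintegral_congr fun t => ENNReal.ofReal_mul (decRearrNN_nonneg hf0 t)]
    rw [lintegral_mul_eq_layer (decRearrNN f) (fun t => decRearrNN g (c - t)) hFm hG'm]
    refine lintegral_mono_ae ?_
    rw [ae_restrict_iff' measurableSet_Ioi]
    refine ae_of_all _ fun l hl => ?_
    refine lintegral_mono_ae ?_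
    rw [ae_restrict_iff' measurableSet_Ioi]
    refine ae_of_all _ fun m hm => ?_
    exact levelInt_bound hfi hgi hf0 hg0 hc.le hl hm
  · rw [conv, integral_undef hint]
    simp

theorem setLIntegral_Ioi_sup {h : ℝ → ℝ≥0∞} (hh : Measurable h) :
    ∫⁻ x in Ioi (0:ℝ), h x = ⨆ n : ℕ, ∫⁻ x in Icc (1/(n+1):ℝ) (n+1), h x := by
  have hpt : ∀ x, (Ioi (0:ℝ)).indicator h x =
      ⨆ n : ℕ, (Icc (1/(n+1):ℝ) (n+1)).indicator h x := by
    intro x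
    rcases le_or_gt x 0 with hx | hx
    · have hnot : ∀ n : ℕ, x ∉ Icc (1/(n+1):ℝ) (n+1) := by
        intro n hmem
        have h0 : (0:ℝ) < 1/(n+1) := by positivity
        have := hmem.1
        linarith
      rw [indicator_of_notMem (by simpa using hx)]
      have hz : ∀ n : ℕ, (Icc (1/(n+1):ℝ) (n+1)).indicator h x = 0 :=
        fun n => indicator_of_notMem (hnot n) h
      symm
      simp only [one_div] at hz
      simp [hz]
    · rw [indicator_of_mem (mem_Ioi.mpr hx)]
      apply le_antisymm
      · obtain ⟨N, hN⟩ := exists_nat_ge (max x (1/x))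
        have h1 : x ≤ (N:ℝ)+1 := by
          have := le_trans (le_max_left x (1/x)) hN; linarith
        have h2 : 1/((N:ℝ)+1) ≤ x := by
          have hinv : 1/x ≤ (N:ℝ)+1 := by
            have := le_trans (le_max_right x (1/x)) hN; linarith
          rw [div_le_iff₀ (by positivity)]
          rw [div_le_iff₀ hx] at hinv
          nlinarith
        refine le_iSup_of_le N ?_
        have hmem : x ∈ Icc (1/((N:ℝ)+1)) ((N:ℝ)+1) := ⟨h2, h1⟩
        rw [indicator_of_mem hmem]
      · exact iSup_le fun n =>
          Set.indicator_le_self' (fun _ _ => zero_le) x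
  have hmono : Monotone (fun n : ℕ => (Icc (1/(n+1):ℝ) (n+1)).indicator h) := by
    intro n n' hnn'
    have hsub : Icc (1/(n+1):ℝ) (n+1) ⊆ Icc (1/(n'+1):ℝ) (n'+1) := by
      apply Icc_subset_Icc
      · apply one_div_le_one_div_of_le
        · positivity
        · have := (Nat.cast_le (α := ℝ)).mpr hnn'; linarith
      · have := (Nat.cast_le (α := ℝ)).mpr hnn'; linarith
    exact Set.indicator_le_indicator_of_subset hsub (fun _ => zero_le)
  calc ∫⁻ x in Ioi (0:ℝ), h x = ∫⁻ x, (Ioi (0:ℝ)).indicator h x :=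
        (lintegral_indicator measurableSet_Ioi h).symm
    _ = ∫⁻ x, ⨆ n : ℕ, (Icc (1/(n+1):ℝ) (n+1)).indicator h x := lintegral_congr hpt
    _ = ⨆ n : ℕ, ∫⁻ x, (Icc (1/(n+1):ℝ) (n+1)).indicator h x :=
        lintegral_iSup (fun n => hh.indicator measurableSet_Icc) hmono
    _ = ⨆ n : ℕ, ∫⁻ x in Icc (1/(n+1):ℝ) (n+1), h x := by
        refine iSup_congr fun n => lintegral_indicator measurableSet_Icc h

theorem conv_lintegral_ae {f g : ℝ → ℝ} (hfm : Measurable f) (hgm : Measurable g)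
    (hfi : Integrable f) (hgi : Integrable g) (hf0 : ∀ y, 0 ≤ f y) (hg0 : ∀ y, 0 ≤ g y) :
    ∀ᵐ x : ℝ, ∫⁻ l in Ioi (0:ℝ), ∫⁻ m in Ioi (0:ℝ),
        volume (lv f l ∩ lv (fun t => g (x - t)) m) = ENNReal.ofReal (conv f g x) := by
  have hprod : Measurable (fun p : ℝ × ℝ =>
      ENNReal.ofReal (f p.2) * ENNReal.ofReal (g (p.1 - p.2))) := by
    exact ((ENNReal.measurable_ofReal.comp (hfm.comp measurable_snd)).mul
      (ENNReal.measurable_ofReal.comp (hgm.comp (measurable_fst.sub measurable_snd))))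
  have hfin : ∫⁻ x, ∫⁻ t, ENNReal.ofReal (f t) * ENNReal.ofReal (g (x - t)) ≠ ⊤ := by
    rw [lintegral_lintegral_swap hprod.aemeasurable]
    have heq : ∀ t : ℝ, ∫⁻ x, ENNReal.ofReal (f t) * ENNReal.ofReal (g (x - t)) =
        ENNReal.ofReal (f t) * ∫⁻ y, ENNReal.ofReal (g y) := by
      intro t
      have hmg : Measurable (fun x : ℝ => ENNReal.ofReal (g (x - t))) := by
        fun_prop
      rw [lintegral_const_mul _ hmg]
      congr 1
      exact lintegral_sub_right_eq_self (fun y => ENNReal.ofReal (g y)) t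
    rw [lintegral_congr heq, lintegral_mul_const' _ _ (lintegral_ofReal_lt_top hgi).ne]
    exact (ENNReal.mul_lt_top (lintegral_ofReal_lt_top hfi) (lintegral_ofReal_lt_top hgi)).ne
  have h1 : ∀ᵐ x : ℝ, ∫⁻ t, ENNReal.ofReal (f t) * ENNReal.ofReal (g (x - t)) < ⊤ :=
    ae_lt_top hprod.lintegral_prod_right' hfin
  filter_upwards [h1] with x hx
  have hgxm : Measurable (fun t => g (x - t)) := hgm.comp (measurable_const.sub measurable_id)
  have hint : Integrable (fun t => f t * g (x - t)) := by
    refine ⟨(hfm.mul hgxm).aestronglyMeasurable, ?_⟩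
    show ∫⁻ t, (‖f t * g (x - t)‖₊ : ℝ≥0∞) < ⊤
    have heq : (fun t => (‖f t * g (x - t)‖₊ : ℝ≥0∞)) =
        fun t => ENNReal.ofReal (f t) * ENNReal.ofReal (g (x - t)) := by
      funext t
      rw [← enorm_eq_nnnorm, Real.enorm_eq_ofReal (mul_nonneg (hf0 t) (hg0 _)),
        ENNReal.ofReal_mul (hf0 t)]
    rw [heq]
    exact hx
  calc ∫⁻ l in Ioi (0:ℝ), ∫⁻ m in Ioi (0:ℝ), volume (lv f l ∩ lv (fun t => g (x - t)) m)
      = ∫⁻ t, ENNReal.ofReal (f t) * ENNReal.ofReal (g (x - t)) :=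
        (lintegral_mul_eq_layer f (fun t => g (x - t)) hfm hgxm).symm
    _ = ∫⁻ t, ENNReal.ofReal (f t * g (x - t)) :=
        lintegral_congr fun t => (ENNReal.ofReal_mul (hf0 t)).symm
    _ = ENNReal.ofReal (∫ t, f t * g (x - t)) :=
        (ofReal_integral_eq_lintegral_ofReal hint
          (ae_of_all _ fun t => mul_nonneg (hf0 t) (hg0 _))).symm
    _ = ENNReal.ofReal (conv f g x) := rfl

theorem step3 {f g : ℝ → ℝ} {x₀ y₀ : ℝ}
    (hfm0 : MonotoneOn f (Iio x₀)) (hfa : AntitoneOn f (Ioi x₀))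
    (hgm0 : MonotoneOn g (Iio y₀)) (hga : AntitoneOn g (Ioi y₀))
    (hfi : Integrable f) (hgi : Integrable g)
    (hf0 : ∀ y, 0 ≤ f y) (hg0 : ∀ y, 0 ≤ g y)
    {c : ℝ} (hc : 0 < c) {δ K : ℝ} (hδ : 0 < δ) :
    ∫⁻ l in Icc δ K, ∫⁻ m in Icc δ K, mE f g c l m ≤ essSupNN (conv f g) := by
  have hfm : Measurable f := unimodal_measurable ⟨x₀, hfm0, hfa⟩
  have hgm : Measurable g := unimodal_measurable ⟨y₀, hgm0, hga⟩
  set Q : Set ℝ := Icc δ K with hQdef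
  set T : Set (ℝ × ℝ) := {z | z.1 ∈ Q ∧ z.2 ∈ Q ∧ 0 < mE f g c z.1 z.2} with hTdef
  have hQpos : ∀ l ∈ Q, 0 < l := fun l hl => lt_of_lt_of_le hδ hl.1
  have hQsub : Q ⊆ Ioi 0 := fun l hl => hQpos l hl
  have hfinf : ∀ l ∈ Q, phi f l ≠ ⊤ := fun l hl => phi_fin hfi (hQpos l hl)
  have hfing : ∀ m ∈ Q, phi g m ≠ ⊤ := fun m hm => phi_fin hgi (hQpos m hm)
  by_cases hT : T.Nonempty
  swap
  · -- degenerate case : mE vanishes on Q × Q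
    have hz : ∀ l ∈ Q, ∀ m ∈ Q, mE f g c l m = 0 := by
      intro l hl m hm
      by_contra hne0
      exact hT ⟨(l, m), hl, hm, pos_iff_ne_zero.mpr hne0⟩
    have hzero : ∫⁻ l in Q, ∫⁻ m in Q, mE f g c l m = 0 := by
      rw [setLIntegral_congr_fun measurableSet_Icc
        ((fun l hl => setLIntegral_congr_fun measurableSet_Icc
          ((fun m hm => hz l hl m hm))))]
      simp
    rw [hzero]
    exact zero_le
  obtain ⟨z₁, hz₁⟩ := hT
  set p : ℝ → ℝ := fun l => sInf (lv f l) with hp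
  set q : ℝ → ℝ := fun l => sSup (lv f l) with hq
  set r : ℝ → ℝ := fun m => sInf (lv g m) with hr
  set s : ℝ → ℝ := fun m => sSup (lv g m) with hs
  set mm : ℝ × ℝ → ℝ := fun z => (mE f g c z.1 z.2).toReal with hmm
  have hTf : ∀ z ∈ T, (lv f z.1).Nonempty := by
    intro z hz
    refine nonempty_of_measure_ne_zero (μ := volume) ?_
    have : 0 < phi f z.1 := lt_of_lt_of_le hz.2.2 (le_trans (min_le_left _ _) (min_le_left _ _))
    exact this.ne'
  have hTg : ∀ z ∈ T, (lv g z.2).Nonempty := by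
    intro z hz
    refine nonempty_of_measure_ne_zero (μ := volume) ?_
    have : 0 < phi g z.2 := lt_of_lt_of_le hz.2.2 (le_trans (min_le_left _ _) (min_le_right _ _))
    exact this.ne'
  have hmm_pos : ∀ z ∈ T, 0 < mm z :=
    fun z hz => ENNReal.toReal_pos hz.2.2.ne' (mE_ne_top _ _ _ _ _)
  have hpqle : ∀ z ∈ T, p z.1 ≤ q z.1 := fun z hz =>
    csInf_le_csSup (hTf z hz) (level_bddBelow hfm0 (hfinf _ hz.1))
      (level_bddAbove hfa (hfinf _ hz.1))
  have hrsle : ∀ z ∈ T, r z.2 ≤ s z.2 := fun z hz =>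
    csInf_le_csSup (hTg z hz) (level_bddBelow hgm0 (hfing _ hz.2.1))
      (level_bddAbove hga (hfing _ hz.2.1))
  have hvolf : ∀ z ∈ T, phi f z.1 = ENNReal.ofReal (q z.1 - p z.1) :=
    fun z hz => level_vol hfm0 hfa (hTf z hz) (hfinf _ hz.1)
  have hvolg : ∀ z ∈ T, phi g z.2 = ENNReal.ofReal (s z.2 - r z.2) :=
    fun z hz => level_vol hgm0 hga (hTg z hz) (hfing _ hz.2.1)
  have hmm_a : ∀ z ∈ T, mm z ≤ q z.1 - p z.1 := by
    intro z hz
    have e1 : mE f g c z.1 z.2 ≤ phi f z.1 := le_trans (min_le_left _ _) (min_le_left _ _)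
    rw [hvolf z hz] at e1
    have := ENNReal.toReal_mono ENNReal.ofReal_ne_top e1
    rwa [ENNReal.toReal_ofReal (sub_nonneg.mpr (hpqle z hz))] at this
  have hmm_b : ∀ z ∈ T, mm z ≤ s z.2 - r z.2 := by
    intro z hz
    have e1 : mE f g c z.1 z.2 ≤ phi g z.2 := le_trans (min_le_left _ _) (min_le_right _ _)
    rw [hvolg z hz] at e1
    have := ENNReal.toReal_mono ENNReal.ofReal_ne_top e1
    rwa [ENNReal.toReal_ofReal (sub_nonneg.mpr (hrsle z hz))] at this
  have hmm_c : ∀ z ∈ T, mm z ≤ c := by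
    intro z hz
    have := ENNReal.toReal_mono ENNReal.ofReal_ne_top (mE_le_ofReal f g c z.1 z.2)
    rwa [ENNReal.toReal_ofReal hc.le] at this
  have hmm_d : ∀ z ∈ T, mm z ≤ (q z.1 - p z.1) + (s z.2 - r z.2) - c := by
    intro z hz
    have e4 : mE f g c z.1 z.2 ≤ (phi f z.1 + phi g z.2) - ENNReal.ofReal c :=
      le_trans (min_le_right _ _) (min_le_right _ _)
    rw [hvolf z hz, hvolg z hz, ← ENNReal.ofReal_add (sub_nonneg.mpr (hpqle z hz))
      (sub_nonneg.mpr (hrsle z hz)), ← ENNReal.ofReal_sub _ hc.le] at e4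
    have hEpos : 0 < (q z.1 - p z.1) + (s z.2 - r z.2) - c :=
      ENNReal.ofReal_pos.mp (lt_of_lt_of_le hz.2.2 e4)
    have := ENNReal.toReal_mono ENNReal.ofReal_ne_top e4
    rwa [ENNReal.toReal_ofReal hEpos.le] at this
  have hpq_mono : ∀ z ∈ T, ∀ w ∈ T, z.1 ≤ w.1 → p z.1 ≤ p w.1 ∧ q w.1 ≤ q z.1 := by
    intro z hz w hw h
    constructor
    · exact csInf_le_csInf (level_bddBelow hfm0 (hfinf _ hz.1)) (hTf w hw) (lv_anti h)
    · exact csSup_le_csSup (level_bddAbove hfa (hfinf _ hz.1)) (hTf w hw) (lv_anti h)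
  have hrs_mono : ∀ z ∈ T, ∀ w ∈ T, z.2 ≤ w.2 → r z.2 ≤ r w.2 ∧ s w.2 ≤ s z.2 := by
    intro z hz w hw h
    constructor
    · exact csInf_le_csInf (level_bddBelow hgm0 (hfing _ hz.2.1)) (hTg w hw) (lv_anti h)
    · exact csSup_le_csSup (level_bddAbove hga (hfing _ hz.2.1)) (hTg w hw) (lv_anti h)
  have hpair : ∀ z ∈ T, ∀ w ∈ T, p z.1 + r z.2 + mm z ≤ q w.1 + s w.2 - mm w := by
    intro z hz w hw
    rcases le_total z.1 w.1 with h1 | h1 <;> rcases le_total z.2 w.2 with h2 | h2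
    · obtain ⟨hpp, hqq⟩ := hpq_mono z hz w hw h1
      obtain ⟨hrr, hss⟩ := hrs_mono z hz w hw h2
      have e1 := hmm_c z hz
      have e2 := hmm_d w hw
      linarith
    · obtain ⟨hpp, hqq⟩ := hpq_mono z hz w hw h1
      obtain ⟨hrr, hss⟩ := hrs_mono w hw z hz h2
      have e1 := hmm_b z hz
      have e2 := hmm_a w hw
      linarith
    · obtain ⟨hpp, hqq⟩ := hpq_mono w hw z hz h1
      obtain ⟨hrr, hss⟩ := hrs_mono z hz w hw h2
      have e1 := hmm_a z hz
      have e2 := hmm_b w hw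
      linarith
    · obtain ⟨hpp, hqq⟩ := hpq_mono w hw z hz h1
      obtain ⟨hrr, hss⟩ := hrs_mono w hw z hz h2
      have e1 := hmm_d z hz
      have e2 := hmm_c w hw
      linarith
  set xh := sSup ((fun z => p z.1 + r z.2 + mm z) '' T) with hxh
  have hbddT : BddAbove ((fun z => p z.1 + r z.2 + mm z) '' T) := by
    refine ⟨q z₁.1 + s z₁.2 - mm z₁, ?_⟩
    rintro _ ⟨w, hw, rfl⟩
    exact hpair w hw z₁ hz₁
  have hxh_ge : ∀ z ∈ T, p z.1 + r z.2 + mm z ≤ xh :=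
    fun z hz => le_csSup hbddT ⟨z, hz, rfl⟩
  have hxh_le : ∀ w ∈ T, xh ≤ q w.1 + s w.2 - mm w := by
    intro w hw
    refine csSup_le (Set.Nonempty.image _ ⟨z₁, hz₁⟩) ?_
    rintro _ ⟨z, hz, rfl⟩
    exact hpair z hz w hw
  have hkey : ∀ η : ℝ, 0 < η → ∀ x ∈ Ioo (xh - η) (xh + η), ∀ l ∈ Q, ∀ m ∈ Q,
      mE f g c l m - ENNReal.ofReal η ≤ volume (lv f l ∩ lv (fun t => g (x - t)) m) := by
    intro η hη x hx l hl m hm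
    by_cases hzT : ((l, m) : ℝ × ℝ) ∈ T
    swap
    · have : mE f g c l m = 0 := by
        by_contra hne0
        exact hzT ⟨hl, hm, pos_iff_ne_zero.mpr hne0⟩
      simp [this]
    · have h1 : p l + r m + mm (l, m) ≤ xh := hxh_ge _ hzT
      have h2 : xh ≤ q l + s m - mm (l, m) := hxh_le _ hzT
      obtain ⟨hx1, hx2⟩ := hx
      have hqp := hmm_a _ hzT
      have hsr := hmm_b _ hzT
      have harith : mm (l, m) - η ≤ min (q l) (x - r m) - max (p l) (x - s m) := by
        simp only at h1 h2 hqp hsr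
        rcases le_total (q l) (x - r m) with h | h <;>
          rcases le_total (p l) (x - s m) with h' | h'
        · rw [min_eq_left h, max_eq_right h']; linarith
        · rw [min_eq_left h, max_eq_left h']; linarith
        · rw [min_eq_right h, max_eq_right h']; linarith
        · rw [min_eq_right h, max_eq_left h']; linarith
      have hpairnull : volume ({x₀, x - y₀} : Set ℝ) = 0 :=
        Set.Countable.measure_zero (by simp) _
      have hsub : Ioo (max (p l) (x - s m)) (min (q l) (x - r m)) \ {x₀, x - y₀} ⊆
          lv f l ∩ lv (fun t => g (x - t)) m := by
        rintro t ⟨⟨ht1, ht2⟩, ht3⟩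
        simp only [mem_insert_iff, mem_singleton_iff, not_or] at ht3
        constructor
        · refine level_Ioo hfm0 hfa (hTf _ hzT) ⟨⟨?_, ?_⟩, ?_⟩
          · exact lt_of_le_of_lt (le_max_left _ _) ht1
          · exact lt_of_lt_of_le ht2 (min_le_left _ _)
          · simpa using ht3.1
        · show m < g (x - t)
          refine level_Ioo hgm0 hga (hTg _ hzT) ⟨⟨?_, ?_⟩, ?_⟩
          · have := lt_of_lt_of_le ht2 (min_le_right _ _); simp only; linarith
          · have := lt_of_le_of_lt (le_max_right _ _) ht1; simp only; linarith
          · simp only [mem_singleton_iff]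
            intro heq
            exact ht3.2 (by linarith)
      calc mE f g c l m - ENNReal.ofReal η
          = ENNReal.ofReal (mm (l, m)) - ENNReal.ofReal η := by
            rw [hmm]; rw [ENNReal.ofReal_toReal (mE_ne_top _ _ _ _ _)]
        _ = ENNReal.ofReal (mm (l, m) - η) := (ENNReal.ofReal_sub _ hη.le).symm
        _ ≤ ENNReal.ofReal (min (q l) (x - r m) - max (p l) (x - s m)) :=
            ENNReal.ofReal_le_ofReal harith
        _ = volume (Ioo (max (p l) (x - s m)) (min (q l) (x - r m))) := Real.volume_Ioo.symm
        _ = volume (Ioo (max (p l) (x - s m)) (min (q l) (x - r m)) \ {x₀, x - y₀}) :=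
            (measure_diff_null hpairnull).symm
        _ ≤ volume (lv f l ∩ lv (fun t => g (x - t)) m) := measure_mono hsub
  have hmain : ∀ η : ℝ, 0 < η →
      (∫⁻ l in Q, ∫⁻ m in Q, mE f g c l m) ≤
        essSupNN (conv f g) + ENNReal.ofReal η * (volume Q * volume Q) := by
    intro η hη
    set E := Ioo (xh - η) (xh + η) with hE
    set D := ENNReal.ofReal η * (volume Q * volume Q) with hD
    set SS := essSupNN (conv f g) with hSS
    have hvolE : volume E = ENNReal.ofReal (2 * η) := by
      rw [hE, Real.volume_Ioo]; congr 1; ring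
    have hae : ∀ᵐ x : ℝ, x ∈ E → (∫⁻ l in Q, ∫⁻ m in Q, mE f g c l m) ≤
        ENNReal.ofReal (conv f g x) + D := by
      filter_upwards [conv_lintegral_ae hfm hgm hfi hgi hf0 hg0] with x hx hxE
      have hW : ∫⁻ l in Q, ∫⁻ m in Q, volume (lv f l ∩ lv (fun t => g (x - t)) m) ≤
          ENNReal.ofReal (conv f g x) := by
        rw [← hx]
        calc ∫⁻ l in Q, ∫⁻ m in Q, volume (lv f l ∩ lv (fun t => g (x - t)) m)
            ≤ ∫⁻ l in Q, ∫⁻ m in Ioi (0:ℝ), volume (lv f l ∩ lv (fun t => g (x - t)) m) :=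
              lintegral_mono fun l => lintegral_mono_set hQsub
          _ ≤ ∫⁻ l in Ioi (0:ℝ), ∫⁻ m in Ioi (0:ℝ),
                volume (lv f l ∩ lv (fun t => g (x - t)) m) :=
              lintegral_mono_set hQsub
      have hIW : (∫⁻ l in Q, ∫⁻ m in Q, mE f g c l m) ≤
          (∫⁻ l in Q, ∫⁻ m in Q, volume (lv f l ∩ lv (fun t => g (x - t)) m)) + D := by
        calc (∫⁻ l in Q, ∫⁻ m in Q, mE f g c l m)
            ≤ ∫⁻ l in Q, ∫⁻ m in Q,
                (volume (lv f l ∩ lv (fun t => g (x - t)) m) + ENNReal.ofReal η) := by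
              refine lintegral_mono_ae ((ae_restrict_iff' measurableSet_Icc).mpr
                (ae_of_all _ fun l hl => ?_))
              refine lintegral_mono_ae ((ae_restrict_iff' measurableSet_Icc).mpr
                (ae_of_all _ fun m hm => ?_))
              exact tsub_le_iff_right.mp (hkey η hη x hxE l hl m hm)
          _ = ∫⁻ l in Q, ((∫⁻ m in Q, volume (lv f l ∩ lv (fun t => g (x - t)) m)) +
                ENNReal.ofReal η * volume Q) :=
              lintegral_congr fun l => by
                rw [lintegral_add_right _ measurable_const, setLIntegral_const]
          _ = (∫⁻ l in Q, ∫⁻ m in Q, volume (lv f l ∩ lv (fun t => g (x - t)) m)) +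
                ENNReal.ofReal η * volume Q * volume Q := by
              rw [lintegral_add_right _ measurable_const, setLIntegral_const]
          _ = (∫⁻ l in Q, ∫⁻ m in Q, volume (lv f l ∩ lv (fun t => g (x - t)) m)) + D := by
              rw [hD, mul_assoc]
      exact le_trans hIW (add_le_add_left hW _)
    have hEi : (∫⁻ l in Q, ∫⁻ m in Q, mE f g c l m) * volume E ≤ (SS + D) * volume E := by
      calc (∫⁻ l in Q, ∫⁻ m in Q, mE f g c l m) * volume E
          = ∫⁻ _ in E, (∫⁻ l in Q, ∫⁻ m in Q, mE f g c l m) := (setLIntegral_const _ _).symm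
        _ ≤ ∫⁻ x in E, (ENNReal.ofReal (conv f g x) + D) :=
            lintegral_mono_ae ((ae_restrict_iff' measurableSet_Ioo).mpr hae)
        _ = (∫⁻ x in E, ENNReal.ofReal (conv f g x)) + D * volume E := by
            rw [lintegral_add_right _ measurable_const, setLIntegral_const]
        _ ≤ SS * volume E + D * volume E := by
            refine add_le_add_left ?_ _
            calc ∫⁻ x in E, ENNReal.ofReal (conv f g x)
                ≤ ∫⁻ _ in E, SS := lintegral_mono_ae
                  (ae_restrict_of_ae (ae_le_essSup (fun x => ENNReal.ofReal (conv f g x))))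
              _ = SS * volume E := setLIntegral_const _ _
        _ = (SS + D) * volume E := by rw [add_mul]
    have hvne : volume E ≠ 0 := by
      rw [hvolE, Ne, ENNReal.ofReal_eq_zero, not_le]
      linarith
    have hvnt : volume E ≠ ⊤ := by rw [hvolE]; exact ENNReal.ofReal_ne_top
    exact (ENNReal.mul_le_mul_iff_left hvne hvnt).mp hEi
  apply ENNReal.le_of_forall_pos_le_add
  intro ε hε _
  set w2 := (K - δ) * (K - δ) with hw2def
  have hw2 : 0 ≤ w2 := mul_self_nonneg _
  set η := (ε : ℝ) / (w2 + 1) with hηdef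
  have hεR : 0 < (ε : ℝ) := hε
  have hη : 0 < η := by positivity
  have hD : ENNReal.ofReal η * (volume Q * volume Q) ≤ (ε : ℝ≥0∞) := by
    have hQv : volume Q = ENNReal.ofReal (K - δ) := Real.volume_Icc
    have hw : volume Q * volume Q ≤ ENNReal.ofReal w2 := by
      rw [hQv, hw2def]
      rcases le_or_gt 0 (K - δ) with hw0 | hw0
      · rw [← ENNReal.ofReal_mul hw0]
      · rw [ENNReal.ofReal_of_nonpos hw0.le]; simp
    calc ENNReal.ofReal η * (volume Q * volume Q)
        ≤ ENNReal.ofReal η * ENNReal.ofReal w2 := mul_le_mul_right hw _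
      _ = ENNReal.ofReal (η * w2) := (ENNReal.ofReal_mul hη.le).symm
      _ ≤ ENNReal.ofReal (ε : ℝ) := by
          refine ENNReal.ofReal_le_ofReal ?_
          rw [hηdef, div_mul_eq_mul_div, div_le_iff₀ (by positivity)]
          nlinarith
      _ = (ε : ℝ≥0∞) := ENNReal.ofReal_coe_nnreal
  exact le_trans (hmain η hη) (add_le_add_right hD _)

theorem Icc_nat_sub {n n' : ℕ} (h : n ≤ n') :
    Icc (1/(n+1):ℝ) (n+1) ⊆ Icc (1/(n'+1):ℝ) (n'+1) := by
  apply Icc_subset_Icc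
  · apply one_div_le_one_div_of_le
    · positivity
    · have := (Nat.cast_le (α := ℝ)).mpr h; linarith
  · have := (Nat.cast_le (α := ℝ)).mpr h; linarith

theorem main_pointwise {f g : ℝ → ℝ}
    (hf0 : ∀ x, 0 ≤ f x) (hg0 : ∀ x, 0 ≤ g x)
    (hfi : Integrable f) (hgi : Integrable g)
    (hfu : Unimodal f) (hgu : Unimodal g) (c : ℝ) :
    ENNReal.ofReal (conv (decRearrNN f) (decRearrNN g) c) ≤ essSupNN (conv f g) := by
  rcases le_or_gt c 0 with hc | hc
  · have hzero : conv (decRearrNN f) (decRearrNN g) c = 0 := by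
      rw [conv]
      apply integral_eq_zero_of_ae
      have hns : volume ({0, c} : Set ℝ) = 0 := Set.Countable.measure_zero (by simp) _
      refine (ae_iff.mpr (measure_mono_null ?_ hns))
      intro t ht
      simp only [mem_setOf_eq, Pi.zero_apply] at ht
      simp only [mem_insert_iff, mem_singleton_iff]
      by_contra hcon
      push_neg at hcon
      apply ht
      rcases lt_trichotomy t 0 with h | h | h
      · rw [decRearrNN_of_neg h, zero_mul]
      · exact absurd h hcon.1
      · have : c - t < 0 := by linarith
        rw [decRearrNN_of_neg this, mul_zero]
    rw [hzero]
    simp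
  · obtain ⟨x₀, hfm0, hfa⟩ := hfu
    obtain ⟨y₀, hgm0, hga⟩ := hgu
    refine le_trans (step1 hfi hgi hf0 hg0 hc) ?_
    have hmeas_inner : ∀ n : ℕ,
        Measurable (fun l => ∫⁻ m in Icc (1/(n+1):ℝ) (n+1), mE f g c l m) := by
      intro n
      refine Antitone.measurable (fun a b hab => ?_)
      exact lintegral_mono fun m => mE_anti_left f g c m hab
    calc ∫⁻ l in Ioi (0:ℝ), ∫⁻ m in Ioi (0:ℝ), mE f g c l m
        = ∫⁻ l in Ioi (0:ℝ), ⨆ n : ℕ, ∫⁻ m in Icc (1/(n+1):ℝ) (n+1), mE f g c l m :=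
          lintegral_congr fun l => setLIntegral_Ioi_sup ((mE_anti_right f g c l).measurable)
      _ = ⨆ n : ℕ, ∫⁻ l in Ioi (0:ℝ), ∫⁻ m in Icc (1/(n+1):ℝ) (n+1), mE f g c l m := by
          refine lintegral_iSup hmeas_inner ?_
          intro n n' h l
          exact lintegral_mono_set (Icc_nat_sub h)
      _ = ⨆ n : ℕ, ⨆ k : ℕ, ∫⁻ l in Icc (1/(k+1):ℝ) (k+1),
            ∫⁻ m in Icc (1/(n+1):ℝ) (n+1), mE f g c l m := by
          refine iSup_congr fun n => setLIntegral_Ioi_sup (hmeas_inner n)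
      _ ≤ essSupNN (conv f g) := by
          refine iSup_le fun n => iSup_le fun k => ?_
          have hstep : ∫⁻ l in Icc (1/(k+1):ℝ) (k+1), ∫⁻ m in Icc (1/(n+1):ℝ) (n+1),
              mE f g c l m ≤ ∫⁻ l in Icc (1/((max n k)+1):ℝ) ((max n k)+1),
                ∫⁻ m in Icc (1/((max n k)+1):ℝ) ((max n k)+1), mE f g c l m := by
            refine le_trans (lintegral_mono fun l => lintegral_mono_set
              (Icc_nat_sub (le_max_left n k))) ?_
            exact lintegral_mono_set (Icc_nat_sub (le_max_right n k))
          refine le_trans hstep ?_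
          exact step3 hfm0 hfa hgm0 hga hfi hgi hf0 hg0 hc (by positivity)

end CRAux

/-- For integrable unimodal nonnegative `f, g` on `ℝ`,
`‖f ⋆ g‖_∞ ≥ ‖f↓ ⋆ g↓‖_∞`. -/
theorem conv_essSup_ge_rearranged (f g : ℝ → ℝ)
    (hf0 : ∀ x, 0 ≤ f x) (hg0 : ∀ x, 0 ≤ g x)
    (hfi : Integrable f) (hgi : Integrable g)
    (hfu : Unimodal f) (hgu : Unimodal g) :
    essSupNN (conv (decRearrNN f) (decRearrNN g)) ≤ essSupNN (conv f g) := by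
  refine essSup_le_of_ae_le _ (ae_of_all _ fun c => ?_)
  exact CRAux.main_pointwise hf0 hg0 hfi hgi hfu hgu c
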